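/- If N = (N_2, …, N_ℓ) is a nest (i.e., the sets N_j are linearly ordered by inclusion after some permutation), then the cone over the N-Ish arrangement is supersolvable. -/

import Mathlib

open MvPolynomial

noncomputable section

/-- The defining linear forms of the cone over the `N`-Ish arrangement.
Variables: `some 0` is `x₁`, `some i.succ` is `x_{i+2}` for `i : Fin n`, `none` is `z`,
so the ambient space is `K^{ℓ+1}` with `ℓ = n+1`, and `N j` is `N_{j+2}`. -/
def coneIsh {K : Type*} [CommRing K] (n : ℕ) (N : Fin n → Finset K) :
    Set (MvPolynomial (Option (Fin (n + 1))) K) :=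
  {X none} ∪
    {p | ∃ i j : Fin n, i < j ∧ p = X (some i.succ) - X (some j.succ)} ∪
    {p | ∃ j : Fin n, ∃ a ∈ N j, p = X (some 0) - X (some j.succ) - C a * X none}

/-- `N` is a nest: after a permutation, the sets form a chain under inclusion. -/
def IsNest {n : ℕ} {α : Type*} (N : Fin n → Finset α) : Prop :=
  ∃ w : Equiv.Perm (Fin n), ∀ i j : Fin n, i ≤ j → N (w i) ⊆ N (w j)

/-- The hyperplane of a defining linear form: its zero locus in `K^σ`. -/
def zeroSet {K : Type*} [CommRing K] {σ : Type*} (p : MvPolynomial σ K) :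
    Set (σ → K) :=
  {v | eval v p = 0}

/-- A central arrangement, given by a set of defining linear forms, is supersolvable:
there is a filtration `A₁ ⊆ A₂ ⊆ … ⊆ A_r = A` of subarrangements with `rank Aᵢ = i`
such that any two distinct hyperplanes of `Aᵢ` intersect inside some hyperplane
of `A_{i-1}` (Björner–Edelman–Ziegler's characterization of supersolvability of the
intersection lattice). -/
def IsSupersolvable {K : Type*} [Field K] {σ : Type*}
    (A : Set (MvPolynomial σ K)) : Prop :=
  ∃ (r : ℕ) (F : ℕ → Set (MvPolynomial σ K)),
    Module.finrank K (Submodule.span K A) = r ∧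
    (∀ i, F i ⊆ F (i + 1)) ∧
    F r = A ∧
    (∀ i, 1 ≤ i → i ≤ r → Module.finrank K (Submodule.span K (F i)) = i) ∧
    (∀ i, 2 ≤ i → i ≤ r → ∀ α ∈ F i, ∀ β ∈ F i, zeroSet α ≠ zeroSet β →
      ∃ γ ∈ F (i - 1), zeroSet α ∩ zeroSet β ⊆ zeroSet γ)

/-! ### Auxiliary machinery -/

/-- The filtration of the cone of the Ish arrangement determined by a rank
function `ρ` on the indices. -/
def ishF {K : Type*} [Field K] (n : ℕ) (N : Fin n → Finset K) (ρ : Fin n → ℕ) (m : ℕ) :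
    Set (MvPolynomial (Option (Fin (n + 1))) K) :=
  {X none} ∪
    {p | ∃ a b : Fin n, a < b ∧ ρ a + 1 ≤ m ∧ ρ b + 1 ≤ m ∧
        p = X (some a.succ) - X (some b.succ)} ∪
    {p | ∃ j : Fin n, ρ j + 1 ≤ m ∧ ∃ c ∈ N j, p = X (some 0) - X (some j.succ) - C c * X none}

lemma ishF_mono {K : Type*} [Field K] {n : ℕ} (N : Fin n → Finset K) (ρ : Fin n → ℕ)
    (m : ℕ) : ishF n N ρ m ⊆ ishF n N ρ (m + 1) := by
  rintro p ((hp | ⟨a, b, hab, h1, h2, rfl⟩) | ⟨j, h1, c, hc, rfl⟩)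
  · exact Or.inl (Or.inl hp)
  · exact Or.inl (Or.inr ⟨a, b, hab, by omega, by omega, rfl⟩)
  · exact Or.inr ⟨j, by omega, c, hc, rfl⟩

lemma ishF_top {K : Type*} [Field K] {n : ℕ} (N : Fin n → Finset K) (ρ : Fin n → ℕ)
    {m : ℕ} (hρ : ∀ j, ρ j + 1 ≤ m) : ishF n N ρ m = coneIsh n N := by
  ext p
  constructor
  · rintro ((hp | ⟨a, b, hab, _, _, rfl⟩) | ⟨j, _, c, hc, rfl⟩)
    · exact Or.inl (Or.inl hp)
    · exact Or.inl (Or.inr ⟨a, b, hab, rfl⟩)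
    · exact Or.inr ⟨j, c, hc, rfl⟩
  · rintro ((hp | ⟨a, b, hab, rfl⟩) | ⟨j, c, hc, rfl⟩)
    · exact Or.inl (Or.inl hp)
    · exact Or.inl (Or.inr ⟨a, b, hab, hρ a, hρ b, rfl⟩)
    · exact Or.inr ⟨j, hρ j, c, hc, rfl⟩

lemma diff_gamma {K : Type*} [Field K] {n : ℕ} {N : Fin n → Finset K} {ρ : Fin n → ℕ}
    {m : ℕ} {a a' : Fin n} (hne : a ≠ a') (h1 : ρ a + 1 ≤ m) (h2 : ρ a' + 1 ≤ m)
    (S : Set (Option (Fin (n + 1)) → K))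
    (hS : ∀ v ∈ S, v (some a.succ) = v (some a'.succ)) :
    ∃ γ ∈ ishF n N ρ m, S ⊆ zeroSet γ := by
  rcases lt_or_gt_of_ne hne with h | h
  · exact ⟨_, Or.inl (Or.inr ⟨a, a', h, h1, h2, rfl⟩), fun v hv => by
      simp only [zeroSet, Set.mem_setOf_eq, map_sub, eval_X, sub_eq_zero]
      exact hS v hv⟩
  · exact ⟨_, Or.inl (Or.inr ⟨a', a, h, h2, h1, rfl⟩), fun v hv => by
      simp only [zeroSet, Set.mem_setOf_eq, map_sub, eval_X, sub_eq_zero]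
      exact (hS v hv).symm⟩

lemma ish_gamma {K : Type*} [Field K] {n : ℕ} {N : Fin n → Finset K} {ρ : Fin n → ℕ}
    {m : ℕ} {a : Fin n} {c : K} (h1 : ρ a + 1 ≤ m) (hc : c ∈ N a)
    (S : Set (Option (Fin (n + 1)) → K))
    (hS : ∀ v ∈ S, v (some 0) - v (some a.succ) - c * v none = 0) :
    ∃ γ ∈ ishF n N ρ m, S ⊆ zeroSet γ :=
  ⟨_, Or.inr ⟨a, h1, c, hc, rfl⟩, fun v hv => by
    simp only [zeroSet, Set.mem_setOf_eq, map_sub, map_mul, eval_X, eval_C]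
    exact hS v hv⟩

lemma mixed_gamma {K : Type*} [Field K] {n : ℕ} (N : Fin n → Finset K) (ρ : Fin n → ℕ)
    (hinj : ∀ j j' : Fin n, ρ j = ρ j' → j = j')
    (hmono : ∀ j j' : Fin n, ρ j ≤ ρ j' → N j' ⊆ N j)
    (i : ℕ) (p q j : Fin n) (c : K) (hpq : p < q)
    (hp : ρ p + 1 ≤ i) (hq : ρ q + 1 ≤ i) (hc : c ∈ N j)
    (hA : ρ p + 1 = i ∨ ρ q + 1 = i) (hB : ρ j + 1 = i) :
    ∃ γ ∈ ishF n N ρ (i - 1),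
      zeroSet (X (some p.succ) - X (some q.succ)) ∩
        zeroSet (X (some 0) - X (some j.succ) - C c * X none) ⊆ zeroSet γ := by
  rcases hA with hA | hA
  · have hpj : p = j := hinj p j (by omega)
    subst hpj
    have hqp : ρ q ≠ ρ p := fun h => absurd (hinj q p h) (ne_of_gt hpq)
    refine ish_gamma (by omega) (hmono q p (by omega) hc) _ ?_
    rintro v ⟨h1, h2⟩
    simp only [zeroSet, Set.mem_setOf_eq, map_sub, map_mul, eval_X, eval_C] at h1 h2
    linear_combination h1 + h2
  · have hqj : q = j := hinj q j (by omega)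
    subst hqj
    have hpq' : ρ p ≠ ρ q := fun h => absurd (hinj p q h) (ne_of_lt hpq)
    refine ish_gamma (by omega) (hmono p q (by omega) hc) _ ?_
    rintro v ⟨h1, h2⟩
    simp only [zeroSet, Set.mem_setOf_eq, map_sub, map_mul, eval_X, eval_C] at h1 h2
    linear_combination h2 - h1

lemma ishF_modular {K : Type*} [Field K] {n : ℕ} (N : Fin n → Finset K) (ρ : Fin n → ℕ)
    (hinj : ∀ j j' : Fin n, ρ j = ρ j' → j = j')
    (hmono : ∀ j j' : Fin n, ρ j ≤ ρ j' → N j' ⊆ N j)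
    (i : ℕ) :
    ∀ α ∈ ishF n N ρ i, ∀ β ∈ ishF n N ρ i, zeroSet α ≠ zeroSet β →
      ∃ γ ∈ ishF n N ρ (i - 1), zeroSet α ∩ zeroSet β ⊆ zeroSet γ := by
  intro α hα β hβ hne
  by_cases hβ' : β ∈ ishF n N ρ (i - 1)
  · exact ⟨β, hβ', Set.inter_subset_right⟩
  by_cases hα' : α ∈ ishF n N ρ (i - 1)
  · exact ⟨α, hα', Set.inter_subset_left⟩
  rcases hα with (h0 | ⟨p, q, hpq, hp, hq, rfl⟩) | ⟨j, hj, c, hc, rfl⟩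
  · exact absurd (Or.inl (Or.inl h0)) hα'
  · have hA : ρ p + 1 = i ∨ ρ q + 1 = i := by
      by_contra hcon
      push_neg at hcon
      exact hα' (Or.inl (Or.inr ⟨p, q, hpq, by omega, by omega, rfl⟩))
    rcases hβ with (h0 | ⟨p', q', hpq', hp', hq', rfl⟩) | ⟨j', hj', c', hc', rfl⟩
    · exact absurd (Or.inl (Or.inl h0)) hβ'
    · have hB : ρ p' + 1 = i ∨ ρ q' + 1 = i := by
        by_contra hcon
        push_neg at hcon
        exact hβ' (Or.inl (Or.inr ⟨p', q', hpq', by omega, by omega, rfl⟩))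
      rcases hA with hA | hA <;> rcases hB with hB | hB
      · have : p = p' := hinj p p' (by omega)
        subst this
        have hne1 : ρ q ≠ ρ p := fun h => absurd (hinj q p h) (ne_of_gt hpq)
        have hne2 : ρ q' ≠ ρ p := fun h => absurd (hinj q' p h) (ne_of_gt hpq')
        by_cases hqq : q = q'
        · subst hqq; exact absurd rfl hne
        · refine diff_gamma hqq (by omega) (by omega) _ ?_
          rintro v ⟨h1, h2⟩
          simp only [zeroSet, Set.mem_setOf_eq, map_sub, eval_X] at h1 h2
          linear_combination h2 - h1
      · have : p = q' := hinj p q' (by omega)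
        subst this
        have hne1 : ρ q ≠ ρ p := fun h => absurd (hinj q p h) (ne_of_gt hpq)
        have hne2 : ρ p' ≠ ρ p := fun h => absurd (hinj p' p h) (ne_of_lt hpq')
        have hqp' : q ≠ p' := fun h => by
          subst h; exact absurd (lt_trans hpq hpq') (lt_irrefl _)
        refine diff_gamma hqp' (by omega) (by omega) _ ?_
        rintro v ⟨h1, h2⟩
        simp only [zeroSet, Set.mem_setOf_eq, map_sub, eval_X] at h1 h2
        linear_combination -h1 - h2
      · have : q = p' := hinj q p' (by omega)
        subst this
        have hne1 : ρ p ≠ ρ q := fun h => absurd (hinj p q h) (ne_of_lt hpq)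
        have hne2 : ρ q' ≠ ρ q := fun h => absurd (hinj q' q h) (ne_of_gt hpq')
        have hpq2 : p ≠ q' := fun h => by
          subst h; exact absurd (lt_trans hpq hpq') (lt_irrefl _)
        refine diff_gamma hpq2 (by omega) (by omega) _ ?_
        rintro v ⟨h1, h2⟩
        simp only [zeroSet, Set.mem_setOf_eq, map_sub, eval_X] at h1 h2
        linear_combination h1 + h2
      · have : q = q' := hinj q q' (by omega)
        subst this
        have hne1 : ρ p ≠ ρ q := fun h => absurd (hinj p q h) (ne_of_lt hpq)
        have hne2 : ρ p' ≠ ρ q := fun h => absurd (hinj p' q h) (ne_of_lt hpq')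
        by_cases hpp : p = p'
        · subst hpp; exact absurd rfl hne
        · refine diff_gamma hpp (by omega) (by omega) _ ?_
          rintro v ⟨h1, h2⟩
          simp only [zeroSet, Set.mem_setOf_eq, map_sub, eval_X] at h1 h2
          linear_combination h1 - h2
    · have hB : ρ j' + 1 = i := by
        by_contra hcon
        exact hβ' (Or.inr ⟨j', by omega, c', hc', rfl⟩)
      exact mixed_gamma N ρ hinj hmono i p q j' c' hpq hp hq hc' hA hB
  · have hA : ρ j + 1 = i := by
      by_contra hcon
      exact hα' (Or.inr ⟨j, by omega, c, hc, rfl⟩)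
    rcases hβ with (h0 | ⟨p', q', hpq', hp', hq', rfl⟩) | ⟨j', hj', c', hc', rfl⟩
    · exact absurd (Or.inl (Or.inl h0)) hβ'
    · have hB : ρ p' + 1 = i ∨ ρ q' + 1 = i := by
        by_contra hcon
        push_neg at hcon
        exact hβ' (Or.inl (Or.inr ⟨p', q', hpq', by omega, by omega, rfl⟩))
      obtain ⟨γ, hγ, hsub⟩ :=
        mixed_gamma N ρ hinj hmono i p' q' j c hpq' hp' hq' hc hB hA
      exact ⟨γ, hγ, fun v hv => hsub ⟨hv.2, hv.1⟩⟩
    · have : j = j' := by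
        have hB : ρ j' + 1 = i := by
          by_contra hcon
          exact hβ' (Or.inr ⟨j', by omega, c', hc', rfl⟩)
        exact hinj j j' (by omega)
      subst this
      by_cases hcc : c = c'
      · subst hcc; exact absurd rfl hne
      · refine ⟨X none, Or.inl (Or.inl rfl), ?_⟩
        rintro v ⟨h1, h2⟩
        simp only [zeroSet, Set.mem_setOf_eq, map_sub, map_mul, eval_X, eval_C] at h1 h2 ⊢
        have hz : (c - c') * v none = 0 := by linear_combination h2 - h1
        rcases mul_eq_zero.1 hz with h | h
        · exact absurd (sub_eq_zero.1 h) hcc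
        · exact h

lemma li_of_dual {K : Type*} [Field K] {σ ι : Type*} [Fintype ι] [DecidableEq ι]
    (b : ι → MvPolynomial σ K) (v : ι → σ → K)
    (h : ∀ t t', eval (v t) (b t') = if t = t' then 1 else 0) :
    LinearIndependent K b := by
  rw [Fintype.linearIndependent_iff]
  intro g hg t
  have h2 := congrArg (eval (v t)) hg
  simp only [map_sum, smul_eq_C_mul, map_mul, eval_C, map_zero] at h2
  rw [Finset.sum_eq_single t] at h2
  · rw [h, if_pos rfl, mul_one] at h2; exact h2
  · intro t' _ hne; rw [h, if_neg (Ne.symm hne), mul_zero]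
  · intro ht; exact absurd (Finset.mem_univ t) ht
def fA {n k : ℕ} (hk : k ≤ n) (w : Equiv.Perm (Fin n)) (t : Fin k) : Fin n :=
  w ⟨n - 1 - t.val, by have := t.isLt; omega⟩

def bA (K : Type*) [Field K] {n k : ℕ} (hk : k ≤ n) (w : Equiv.Perm (Fin n)) :
    Fin (k + 1) → MvPolynomial (Option (Fin (n + 1))) K :=
  Fin.cons (X none) (fun t => X (some 0) - X (some (fA hk w t).succ))

lemma rank_A {K : Type*} [Field K] {n : ℕ} (N : Fin n → Finset K) (w : Equiv.Perm (Fin n))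
    (hw : ∀ i j : Fin n, i ≤ j → N (w i) ⊆ N (w j)) (j0 : Fin n) (hj0 : (N j0).Nonempty)
    (k : ℕ) (hk : k ≤ n) :
    Module.finrank K (Submodule.span K
      (ishF n N (fun j => n - (w.symm j).val) (k + 1))) = k + 1 := by
  classical
  have hn : 0 < n := j0.pos
  set ρ : Fin n → ℕ := fun j => n - (w.symm j).val with hρdef
  have hρ1 : ∀ p : Fin n, 1 ≤ ρ p ∧ ρ p ≤ n := by
    intro p; have := (w.symm p).isLt; constructor <;> simp [hρdef] <;> omega
  have hρf : ∀ t : Fin k, ρ (fA hk w t) = t.val + 1 := by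
    intro t
    have ht := t.isLt
    simp only [hρdef, fA, Equiv.symm_apply_apply]
    omega
  have hfinj : ∀ s t : Fin k, fA hk w s = fA hk w t → s = t := by
    intro s t h
    have h2 := congrArg ρ h
    rw [hρf, hρf] at h2
    exact Fin.ext (by omega)
  have hfs : ∀ p : Fin n, ρ p ≤ k → ∃ t : Fin k, fA hk w t = p := by
    intro p hp
    have h1 := (hρ1 p).1
    refine ⟨⟨ρ p - 1, by omega⟩, ?_⟩
    show w _ = p
    rw [Equiv.apply_eq_iff_eq_symm_apply]
    apply Fin.ext
    have := (w.symm p).isLt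
    simp only [hρdef] at h1 hp ⊢
    omega
  -- linear independence
  have hli : LinearIndependent K (bA K hk w) := by
    apply li_of_dual (bA K hk w)
      (Fin.cons (fun u => if u = none then 1 else 0)
        (fun t u => if u = some (fA hk w t).succ then -1 else 0))
    intro t t'
    induction t using Fin.cases with
    | zero =>
      induction t' using Fin.cases with
      | zero => simp [bA]
      | succ s => simp [bA, (Fin.succ_ne_zero s).symm]
    | succ t =>
      induction t' using Fin.cases with
      | zero => simp [bA, Fin.succ_ne_zero t]
      | succ s =>
        have h0 : (some (0 : Fin (n+1))) ≠ some (fA hk w t).succ := by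
          simp [(Fin.succ_ne_zero (fA hk w t)).symm]
        by_cases hst : s = t
        · subst hst
          simp [bA, (Fin.succ_ne_zero (fA hk w s)).symm]
        · have : (fA hk w s) ≠ fA hk w t := fun h => hst (hfinj s t h)
          simp [bA, h0, this, Fin.succ_ne_zero, hst, Ne.symm hst]
  have hspan : Submodule.span K (ishF n N ρ (k + 1)) =
      Submodule.span K (Set.range (bA K hk w)) := by
    apply le_antisymm
    · rw [Submodule.span_le]
      rintro p ((rfl | ⟨a, b, hab, h1, h2, rfl⟩) | ⟨j, h1, c, hc, rfl⟩)
      · exact Submodule.subset_span ⟨0, rfl⟩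
      · obtain ⟨ta, hta⟩ := hfs a (by omega)
        obtain ⟨tb, htb⟩ := hfs b (by omega)
        have ha : (X (some 0) - X (some a.succ) : MvPolynomial (Option (Fin (n+1))) K)
            ∈ Set.range (bA K hk w) := ⟨ta.succ, by rw [bA, Fin.cons_succ, hta]⟩
        have hb : (X (some 0) - X (some b.succ) : MvPolynomial (Option (Fin (n+1))) K)
            ∈ Set.range (bA K hk w) := ⟨tb.succ, by rw [bA, Fin.cons_succ, htb]⟩
        have : (X (some a.succ) - X (some b.succ) : MvPolynomial (Option (Fin (n+1))) K)
            = (X (some 0) - X (some b.succ)) - (X (some 0) - X (some a.succ)) := by ring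
        rw [this]
        exact Submodule.sub_mem _ (Submodule.subset_span hb) (Submodule.subset_span ha)
      · obtain ⟨tj, htj⟩ := hfs j (by omega)
        have hj : (X (some 0) - X (some j.succ) : MvPolynomial (Option (Fin (n+1))) K)
            ∈ Set.range (bA K hk w) := ⟨tj.succ, by rw [bA, Fin.cons_succ, htj]⟩
        have hz : (X none : MvPolynomial (Option (Fin (n+1))) K)
            ∈ Set.range (bA K hk w) := ⟨0, rfl⟩
        have : (X (some 0) - X (some j.succ) - C c * X none :
            MvPolynomial (Option (Fin (n+1))) K)
            = (X (some 0) - X (some j.succ)) - c • (X none) := by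
          rw [smul_eq_C_mul]
        rw [this]
        exact Submodule.sub_mem _ (Submodule.subset_span hj)
          (Submodule.smul_mem _ c (Submodule.subset_span hz))
    · rw [Submodule.span_le]
      rintro p ⟨t, rfl⟩
      induction t using Fin.cases with
      | zero =>
        exact Submodule.subset_span (Or.inl (Or.inl rfl))
      | succ t =>
        -- b t.succ = X 0 - X (f t).succ
        have hkpos : 0 < k := t.pos
        set c1 : Fin n := fA hk w ⟨0, hkpos⟩ with hc1def
        have hρc1 : ρ c1 = 1 := hρf ⟨0, hkpos⟩
        obtain ⟨a₀, ha₀⟩ := hj0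
        have hac1 : a₀ ∈ N c1 := by
          have h1 : N j0 ⊆ N c1 := by
            have : j0 = w (w.symm j0) := (Equiv.apply_symm_apply w j0).symm
            rw [this, hc1def, fA]
            apply hw
            rw [Fin.le_def]
            have := (w.symm j0).isLt
            simp
            omega
          exact h1 ha₀
        set j : Fin n := fA hk w t with hjdef
        have hρj : ρ j = t.val + 1 := hρf t
        have hzmem : (X none : MvPolynomial (Option (Fin (n+1))) K)
            ∈ Submodule.span K (ishF n N ρ (k+1)) :=
          Submodule.subset_span (Or.inl (Or.inl rfl))
        have he1 : (X (some 0) - X (some c1.succ) - C a₀ * X none :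
            MvPolynomial (Option (Fin (n+1))) K)
            ∈ Submodule.span K (ishF n N ρ (k+1)) :=
          Submodule.subset_span (Or.inr ⟨c1, by omega, a₀, hac1, rfl⟩)
        rw [bA, Fin.cons_succ]
        by_cases hjc : j = c1
        · have : (X (some 0) - X (some (fA hk w t).succ) :
              MvPolynomial (Option (Fin (n+1))) K)
              = (X (some 0) - X (some c1.succ) - C a₀ * X none) + a₀ • (X none) := by
            rw [smul_eq_C_mul, ← hjdef, hjc]; ring
          rw [this]
          exact Submodule.add_mem _ he1 (Submodule.smul_mem _ a₀ hzmem)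
        · have hd : (X (some c1.succ) - X (some j.succ) :
              MvPolynomial (Option (Fin (n+1))) K)
              ∈ Submodule.span K (ishF n N ρ (k+1)) := by
            rcases lt_or_gt_of_ne (Ne.symm hjc) with h | h
            · exact Submodule.subset_span (Or.inl (Or.inr
                ⟨c1, j, h, by omega, by omega, rfl⟩))
            · have : (X (some c1.succ) - X (some j.succ) :
                  MvPolynomial (Option (Fin (n+1))) K)
                  = -(X (some j.succ) - X (some c1.succ)) := by ring
              rw [this]
              exact Submodule.neg_mem _ (Submodule.subset_span (Or.inl (Or.inr
                ⟨j, c1, h, by omega, by omega, rfl⟩)))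
          have : (X (some 0) - X (some (fA hk w t).succ) :
              MvPolynomial (Option (Fin (n+1))) K)
              = ((X (some 0) - X (some c1.succ) - C a₀ * X none) + a₀ • (X none))
                + (X (some c1.succ) - X (some j.succ)) := by
            rw [smul_eq_C_mul, ← hjdef]; ring
          rw [this]
          exact Submodule.add_mem _
            (Submodule.add_mem _ he1 (Submodule.smul_mem _ a₀ hzmem)) hd
  rw [hspan, finrank_span_eq_card hli, Fintype.card_fin]
def fB {n k : ℕ} (hk : k + 1 ≤ n) (t : Fin k) : Fin n :=
  ⟨t.val + 1, by have := t.isLt; omega⟩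

def bB (K : Type*) [Field K] {n k : ℕ} (hk : k + 1 ≤ n) :
    Fin (k + 1) → MvPolynomial (Option (Fin (n + 1))) K :=
  Fin.cons (X none)
    (fun t => X (some (⟨0, by omega⟩ : Fin n).succ) - X (some (fB hk t).succ))

lemma rank_B {K : Type*} [Field K] {n : ℕ} (N : Fin n → Finset K)
    (hemp : ∀ j, N j = ∅) (k : ℕ) (hk : k + 1 ≤ n) :
    Module.finrank K (Submodule.span K
      (ishF n N (fun j => j.val) (k + 1))) = k + 1 := by
  classical
  set p₀ : Fin n := ⟨0, by omega⟩ with hp₀def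
  have hfB : ∀ t : Fin k, (fB hk t).val = t.val + 1 := fun t => rfl
  have hfinj : ∀ s t : Fin k, fB hk s = fB hk t → s = t := by
    intro s t h
    have h2 := congrArg Fin.val h
    rw [hfB, hfB] at h2
    exact Fin.ext (by omega)
  have hli : LinearIndependent K (bB K hk) := by
    apply li_of_dual (bB K hk)
      (Fin.cons (fun u => if u = none then 1 else 0)
        (fun t u => if u = some (fB hk t).succ then -1 else 0))
    intro t t'
    have hp0f : ∀ t : Fin k, p₀ ≠ fB hk t := by
      intro t h
      have := congrArg Fin.val h
      rw [hfB] at this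
      simp [hp₀def] at this
    induction t using Fin.cases with
    | zero =>
      induction t' using Fin.cases with
      | zero => simp [bB]
      | succ s => simp [bB, (Fin.succ_ne_zero s).symm]
    | succ t =>
      induction t' using Fin.cases with
      | zero => simp [bB, Fin.succ_ne_zero t]
      | succ s =>
        have h0 : (some (p₀.succ) : Option (Fin (n+1))) ≠ some (fB hk t).succ := by
          simp [Fin.succ_inj]
          exact hp0f t
        by_cases hst : s = t
        · subst hst
          simp only [bB, Fin.cons_succ, map_sub, eval_X]
          rw [if_neg h0]
          simp
        · have h1 : (some (fB hk s).succ : Option (Fin (n+1))) ≠ some (fB hk t).succ := by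
            simp [Fin.succ_inj]
            exact fun h => hst (hfinj s t h)
          simp only [bB, Fin.cons_succ, map_sub, eval_X]
          rw [if_neg h0, if_neg h1, if_neg (by simp [Fin.succ_inj]; exact Ne.symm hst)]
          simp
  have hfs : ∀ p : Fin n, 1 ≤ p.val → p.val ≤ k →
      (X (some p₀.succ) - X (some p.succ) : MvPolynomial (Option (Fin (n+1))) K)
        ∈ Set.range (bB K hk) := by
    intro p h1 h2
    refine ⟨Fin.succ ⟨p.val - 1, by omega⟩, ?_⟩
    rw [bB, Fin.cons_succ]
    have : fB hk ⟨p.val - 1, by omega⟩ = p := Fin.ext (by rw [hfB]; simp; omega)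
    rw [this]
  have hspan : Submodule.span K (ishF n N (fun j => j.val) (k + 1)) =
      Submodule.span K (Set.range (bB K hk)) := by
    apply le_antisymm
    · rw [Submodule.span_le]
      rintro p ((rfl | ⟨a, b, hab, h1, h2, rfl⟩) | ⟨j, h1, c, hc, rfl⟩)
      · exact Submodule.subset_span ⟨0, rfl⟩
      · have h1' : a.val + 1 ≤ k + 1 := h1
        have h2' : b.val + 1 ≤ k + 1 := h2
        have hb1 : 1 ≤ b.val := by
          have := hab
          rw [Fin.lt_def] at this
          omega
        by_cases ha0 : a.val = 0
        · have : a = p₀ := Fin.ext (by simp [hp₀def, ha0])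
          rw [this]
          exact Submodule.subset_span (hfs b hb1 (by omega))
        · have heq : (X (some a.succ) - X (some b.succ) :
              MvPolynomial (Option (Fin (n+1))) K)
              = (X (some p₀.succ) - X (some b.succ))
                - (X (some p₀.succ) - X (some a.succ)) := by ring
          rw [heq]
          exact Submodule.sub_mem _
            (Submodule.subset_span (hfs b hb1 (by omega)))
            (Submodule.subset_span (hfs a (by omega) (by omega)))
      · rw [hemp j] at hc
        exact absurd hc (Finset.notMem_empty c)
    · rw [Submodule.span_le]
      rintro p ⟨t, rfl⟩
      induction t using Fin.cases with
      | zero => exact Submodule.subset_span (Or.inl (Or.inl rfl))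
      | succ t =>
        rw [bB, Fin.cons_succ]
        refine Submodule.subset_span (Or.inl (Or.inr ⟨p₀, fB hk t, ?_, ?_, ?_, rfl⟩))
        · rw [Fin.lt_def, hfB]; simp [hp₀def]
        · simp [hp₀def]
        · show (fB hk t).val + 1 ≤ k + 1
          rw [hfB]; have := t.isLt; omega
  rw [hspan, finrank_span_eq_card hli, Fintype.card_fin]

/-- If `N` is a nest, then the cone over the `N`-Ish arrangement is supersolvable. -/
theorem cone_ish_supersolvable (K : Type*) [Field K] [CharZero K]
    (n : ℕ) (N : Fin n → Finset K) (h : IsNest N) :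
    IsSupersolvable (coneIsh n N) := by
  classical
  obtain ⟨w, hw⟩ := h
  rcases Nat.eq_zero_or_pos n with hn | hn
  · subst hn
    have hA : coneIsh 0 N = {X none} := by
      ext p
      constructor
      · rintro ((h | ⟨i, _, _, _⟩) | ⟨j, _⟩)
        · exact h
        · exact i.elim0
        · exact j.elim0
      · intro h
        exact Or.inl (Or.inl h)
    refine ⟨1, fun _ => {X none}, ?_, ?_, ?_, ?_, ?_⟩
    · rw [hA]
      exact finrank_span_singleton (X_ne_zero _)
    · intro i; exact subset_rfl
    · exact hA.symm
    · intro i h1 h2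
      have : i = 1 := le_antisymm h2 h1
      subst this
      exact finrank_span_singleton (X_ne_zero _)
    · intro i h1 h2
      omega
  · by_cases hex : ∃ j0, (N j0).Nonempty
    · obtain ⟨j0, hj0⟩ := hex
      set ρ : Fin n → ℕ := fun j => n - (w.symm j).val with hρdef
      have hinj : ∀ j j' : Fin n, ρ j = ρ j' → j = j' := by
        intro j j' hjj
        have h1 := (w.symm j).isLt
        have h2 := (w.symm j').isLt
        have : w.symm j = w.symm j' := by
          apply Fin.ext
          simp only [hρdef] at hjj
          omega
        have := congrArg w this
        simpa using this
      have hmono : ∀ j j' : Fin n, ρ j ≤ ρ j' → N j' ⊆ N j := by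
        intro j j' hjj
        have h1 := (w.symm j).isLt
        have h2 := (w.symm j').isLt
        have hle : w.symm j' ≤ w.symm j := by
          rw [Fin.le_def]
          simp only [hρdef] at hjj
          omega
        have := hw _ _ hle
        simpa using this
      have hbound : ∀ j, ρ j + 1 ≤ n + 1 := by
        intro j
        have := (w.symm j).isLt
        simp only [hρdef]
        omega
      refine ⟨n + 1, fun i => ishF n N ρ i, ?_, ?_, ?_, ?_, ?_⟩
      · rw [← ishF_top N ρ hbound]
        exact rank_A N w hw j0 hj0 n le_rfl
      · intro i
        exact ishF_mono N ρ i
      · exact ishF_top N ρ hbound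
      · intro i h1 h2
        obtain ⟨k, rfl⟩ : ∃ k, i = k + 1 := ⟨i - 1, by omega⟩
        exact rank_A N w hw j0 hj0 k (by omega)
      · intro i _ _
        exact ishF_modular N ρ hinj hmono i
    · push_neg at hex
      have hemp : ∀ j, N j = ∅ := fun j => hex j
      have hbound : ∀ j : Fin n, (fun j : Fin n => j.val) j + 1 ≤ n := fun j => j.isLt
      refine ⟨n, fun i => ishF n N (fun j => j.val) i, ?_, ?_, ?_, ?_, ?_⟩
      · rw [← ishF_top N _ hbound]
        obtain ⟨k, rfl⟩ : ∃ k, n = k + 1 := ⟨n - 1, by omega⟩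
        exact rank_B N hemp k le_rfl
      · intro i
        exact ishF_mono N _ i
      · exact ishF_top N _ hbound
      · intro i h1 h2
        obtain ⟨k, rfl⟩ : ∃ k, i = k + 1 := ⟨i - 1, by omega⟩
        exact rank_B N hemp k (by omega)
      · intro i _ _
        exact ishF_modular N _ (fun j j' hjj => Fin.ext hjj)
          (fun j j' _ => by rw [hemp j']; exact Finset.empty_subset _) i


end
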